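/- arXiv:2404.08280 — 5 statements merged into one kernel-verified Lean document; each statement's English description precedes it below -/
import Mathlib

section
/- Let k ≥ 2t be positive integers and let α = (a_1,…,a_k) ∈ F_2^k be such that t is the maximum index with a_t = 1 (so a_i = 0 for all t < i ≤ k). Then f_α(n) ~ (t!·n)^{1/t} as n → ∞, i.e., lim_{n→∞} f_α(n)/(t!·n)^{1/t} = 1. -/
open Filter

/-- A family `F` of subsets of `[n]` (here `Fin n`) is `α`-intersecting modulo 2 for a
vector `α ∈ F_2^k` if for each `ℓ ∈ [k]`, any `ℓ` pairwise distinct members of `F`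
have an intersection of cardinality congruent to `a_ℓ` modulo 2.
Here `α ℓ` (for `ℓ : Fin k`) denotes the `(ℓ+1)`-st coordinate `a_{ℓ+1}`. -/
def IsIntersecting (k n : ℕ) (α : Fin k → ZMod 2) (F : Finset (Finset (Fin n))) : Prop :=
  ∀ (ℓ : Fin k) (S : Finset (Finset (Fin n))), S ⊆ F → S.card = ℓ.1 + 1 →
    ((S.inf id).card : ZMod 2) = α ℓ

/-- `fMax k n α` is the maximum size of an `α`-intersecting family of subsets of `[n]`. -/
noncomputable def fMax (k n : ℕ) (α : Fin k → ZMod 2) : ℕ :=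
  sSup {m | ∃ F : Finset (Finset (Fin n)), IsIntersecting k n α F ∧ F.card = m}

lemma orthoLI {n : ℕ} {ι : Type*} [DecidableEq ι] (v : ι → (Fin n → ZMod 2))
    (h : ∀ i j, (∑ x, v i x * v j x) = if i = j then 1 else 0) :
    LinearIndependent (ZMod 2) v := by
  rw [linearIndependent_iff']
  intro s g hg j hj
  have key : ∑ i ∈ s, g i * (∑ x, v i x * v j x) = 0 := by
    have : ∑ i ∈ s, g i * (∑ x, v i x * v j x)
        = ∑ x, (∑ i ∈ s, g i • v i) x * v j x := by
      simp only [Finset.sum_apply, Pi.smul_apply, smul_eq_mul, Finset.sum_mul, Finset.mul_sum]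
      rw [Finset.sum_comm]
      ring_nf
    rw [this, hg]
    simp
  simp only [h, mul_ite, mul_one, mul_zero] at key
  rwa [Finset.sum_ite_eq' s j g, if_pos hj] at key

lemma indicator_dot {n : ℕ} (s u : Finset (Fin n)) :
    (∑ x, (if x ∈ s then (1 : ZMod 2) else 0) * (if x ∈ u then 1 else 0))
      = ((s ∩ u).card : ZMod 2) := by
  have : ∀ x, (if x ∈ s then (1 : ZMod 2) else 0) * (if x ∈ u then 1 else 0)
      = if x ∈ s ∩ u then 1 else 0 := by
    intro x
    by_cases hx : x ∈ s <;> by_cases hy : x ∈ u <;> simp [hx, hy]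
  rw [Finset.sum_congr rfl fun x _ => this x, Finset.sum_boole]
  congr 1
  rw [Finset.filter_univ_mem]

lemma mem_inf_id {γ : Type*} [DecidableEq γ] [Fintype γ] (S : Finset (Finset γ)) (x : γ) :
    x ∈ S.inf id ↔ ∀ F ∈ S, x ∈ F := by
  induction S using Finset.induction with
  | empty => simp
  | insert h ih => simp_all [Finset.inf_insert]

lemma family_choose_le (t k n : ℕ) (ht : 1 ≤ t) (hk : 2 * t ≤ k) (α : Fin k → ZMod 2)
    (hat : α ⟨t - 1, (by omega : t - 1 < 2 * t).trans_le hk⟩ = 1) (h0 : ∀ i : Fin k, t ≤ i.1 → α i = 0)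
    (F : Finset (Finset (Fin n))) (hF : IsIntersecting k n α F) :
    Nat.choose F.card t ≤ n := by
  classical
  set ι := {T // T ∈ F.powersetCard t} with hι
  have hmem : ∀ T : ι, (T : Finset (Finset (Fin n))) ⊆ F ∧ (T : Finset (Finset (Fin n))).card = t := by
    intro T
    have := T.2
    rw [Finset.mem_powersetCard] at this
    exact this
  set v : ι → (Fin n → ZMod 2) :=
    fun T x => if x ∈ (T : Finset (Finset (Fin n))).inf id then 1 else 0 with hv
  have hortho : ∀ T U : ι, (∑ x, v T x * v U x) = if T = U then 1 else 0 := by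
    intro T U
    rw [hv]
    simp only
    rw [indicator_dot]
    have hcap : (T : Finset (Finset (Fin n))).inf id ∩ (U : Finset (Finset (Fin n))).inf id
        = ((T : Finset (Finset (Fin n))) ∪ (U : Finset (Finset (Fin n)))).inf id := by
      rw [Finset.inf_union]; rfl
    rw [hcap]
    set W := (T : Finset (Finset (Fin n))) ∪ (U : Finset (Finset (Fin n))) with hW
    have hWsub : W ⊆ F := Finset.union_subset (hmem T).1 (hmem U).1
    have hWcard_le : W.card ≤ 2 * t := by
      calc W.card ≤ (T : Finset (Finset (Fin n))).card + (U : Finset (Finset (Fin n))).card :=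
        Finset.card_union_le _ _
      _ = 2 * t := by rw [(hmem T).2, (hmem U).2]; ring
    have hWcard_ge : t ≤ W.card := by
      calc t = (T : Finset (Finset (Fin n))).card := ((hmem T).2).symm
      _ ≤ W.card := Finset.card_le_card Finset.subset_union_left
    by_cases hTU : T = U
    · subst hTU
      simp only [if_pos rfl]
      have hWT : W = (T : Finset (Finset (Fin n))) := by rw [hW, Finset.union_self]
      have := hF ⟨t - 1, by omega⟩ W hWsub (by show W.card = t - 1 + 1; rw [hWT, (hmem T).2]; omega)
      rw [this]
      exact hat
    · rw [if_neg hTU]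
      have hne : (T : Finset (Finset (Fin n))) ≠ (U : Finset (Finset (Fin n))) := by
        intro h; exact hTU (Subtype.ext h)
      have hlt : t < W.card := by
        rcases Nat.lt_or_ge t W.card with h | h
        · exact h
        · exfalso
          have h1 := (hmem T).2
          have hWc : ((T : Finset (Finset (Fin n))) ∪ (U : Finset (Finset (Fin n)))).card = W.card := by rw [hW]
          have hTeq : (T : Finset (Finset (Fin n))) = W := by
            apply Finset.eq_of_subset_of_card_le (hW ▸ Finset.subset_union_left)
            omega
          have hUeq : (U : Finset (Finset (Fin n))) = W := by
            apply Finset.eq_of_subset_of_card_le (hW ▸ Finset.subset_union_right)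
            rw [(hmem U).2]; omega
          exact hne (hTeq.trans hUeq.symm)
      have := hF ⟨W.card - 1, by omega⟩ W hWsub (by show W.card = W.card - 1 + 1; omega)
      rw [this]
      exact h0 _ (by show t ≤ W.card - 1; omega)
  have hli := orthoLI v hortho
  have hcard := hli.fintype_card_le_finrank
  rw [Module.finrank_pi] at hcard
  simp only [Fintype.card_fin] at hcard
  calc Nat.choose F.card t = (F.powersetCard t).card := (Finset.card_powersetCard t F).symm
  _ = Fintype.card ι := (Fintype.card_coe _).symm
  _ ≤ n := hcard

lemma isIntersecting_empty (k n : ℕ) (α : Fin k → ZMod 2) :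
    IsIntersecting k n α (∅ : Finset (Finset (Fin n))) := by
  intro ℓ S hS hcard
  exfalso
  have : S = ∅ := Finset.subset_empty.mp hS
  rw [this] at hcard
  simp at hcard

lemma bddAbove_fam (k n : ℕ) (α : Fin k → ZMod 2) :
    BddAbove {m | ∃ F : Finset (Finset (Fin n)), IsIntersecting k n α F ∧ F.card = m} := by
  refine ⟨2 ^ n, fun m hm => ?_⟩
  obtain ⟨F, _, hcard⟩ := hm
  calc m = F.card := hcard.symm
  _ ≤ Fintype.card (Finset (Fin n)) := Finset.card_le_univ F
  _ = 2 ^ n := by simp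

lemma exists_fMax (k n : ℕ) (α : Fin k → ZMod 2) :
    ∃ F : Finset (Finset (Fin n)), IsIntersecting k n α F ∧ F.card = fMax k n α :=
 by
  have h1 : ({m | ∃ F : Finset (Finset (Fin n)), IsIntersecting k n α F ∧ F.card = m}).Nonempty :=
    ⟨0, ∅, isIntersecting_empty k n α, rfl⟩
  exact Nat.sSup_mem h1 (bddAbove_fam k n α)

lemma le_fMax (k n : ℕ) (α : Fin k → ZMod 2) (F : Finset (Finset (Fin n)))
    (h : IsIntersecting k n α F) : F.card ≤ fMax k n α :=
  le_csSup (bddAbove_fam k n α) ⟨F, h, rfl⟩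

lemma descFactorial_eq_choose_mul (m t : ℕ) :
    m.descFactorial t = m.choose t * t.factorial := by
  rcases le_or_gt t m with h | h
  · rw [Nat.choose_eq_descFactorial_div_factorial,
      Nat.div_mul_cancel (Nat.factorial_dvd_descFactorial m t)]
  · rw [Nat.choose_eq_zero_of_lt h, Nat.descFactorial_eq_zero_iff_lt.mpr h, zero_mul]

lemma pow_le_descFactorial (m t : ℕ) : (m + 1 - t) ^ t ≤ m.descFactorial t := by
  rw [Nat.descFactorial_eq_prod_range]
  calc (m + 1 - t) ^ t = ∏ _i ∈ Finset.range t, (m + 1 - t) := by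
        rw [Finset.prod_const, Finset.card_range]
  _ ≤ ∏ i ∈ Finset.range t, (m - i) := by
        apply Finset.prod_le_prod'
        intro i hi
        rw [Finset.mem_range] at hi
        omega

/-- key nat inequality from the linear algebra bound -/
lemma pow_le_of_choose_le {m t n : ℕ} (h : m.choose t ≤ n) :
    (m + 1 - t) ^ t ≤ t.factorial * n := by
  calc (m + 1 - t) ^ t ≤ m.descFactorial t := pow_le_descFactorial m t
  _ = m.choose t * t.factorial := descFactorial_eq_choose_mul m t
  _ ≤ n * t.factorial := Nat.mul_le_mul_right _ h
  _ = t.factorial * n := Nat.mul_comm _ _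

lemma real_le_rpow_of_pow_le {x y : ℝ} {t : ℕ} (ht : 1 ≤ t) (hx : 0 ≤ x)
    (h : x ^ t ≤ y) : x ≤ y ^ ((1 : ℝ) / (t : ℝ)) := by
  have hy : 0 ≤ y := le_trans (pow_nonneg hx t) h
  have h1 : (x ^ t : ℝ) ^ ((1 : ℝ) / (t : ℝ)) ≤ y ^ ((1 : ℝ) / (t : ℝ)) :=
    Real.rpow_le_rpow (pow_nonneg hx t) h (by positivity)
  have h2 : (x ^ t : ℝ) ^ ((1 : ℝ) / (t : ℝ)) = x := by
    rw [← Real.rpow_natCast x t, ← Real.rpow_mul hx]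
    have htr : (t : ℝ) ≠ 0 := Nat.cast_ne_zero.mpr (by omega)
    rw [mul_one_div, div_self htr]
    exact Real.rpow_one x
  rwa [h2] at h1

lemma fMax_le_bound (t k n : ℕ) (ht : 1 ≤ t) (hk : 2 * t ≤ k) (α : Fin k → ZMod 2)
    (hat : α ⟨t - 1, (by omega : t - 1 < 2 * t).trans_le hk⟩ = 1) (h0 : ∀ i : Fin k, t ≤ i.1 → α i = 0) :
    (fMax k n α : ℝ) ≤ ((t.factorial : ℝ) * (n : ℝ)) ^ ((1 : ℝ) / (t : ℝ)) + t := by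
  obtain ⟨F, hF, hcard⟩ := exists_fMax k n α
  set m := fMax k n α with hm
  have hchoose : m.choose t ≤ n := hcard ▸ family_choose_le t k n ht hk α hat h0 F hF
  have hnat : (m + 1 - t) ^ t ≤ t.factorial * n := pow_le_of_choose_le hchoose
  have hreal : ((m + 1 - t : ℕ) : ℝ) ≤ ((t.factorial : ℝ) * (n : ℝ)) ^ ((1 : ℝ) / (t : ℝ)) := by
    apply real_le_rpow_of_pow_le ht (Nat.cast_nonneg _)
    calc ((m + 1 - t : ℕ) : ℝ) ^ t = (((m + 1 - t) ^ t : ℕ) : ℝ) := by push_cast; ring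
    _ ≤ ((t.factorial * n : ℕ) : ℝ) := by exact_mod_cast hnat
    _ = (t.factorial : ℝ) * n := by push_cast; ring
  have : (m : ℝ) ≤ ((m + 1 - t : ℕ) : ℝ) + t := by
    have : m ≤ (m + 1 - t) + t := by omega
    exact_mod_cast this
  calc (m : ℝ) ≤ ((m + 1 - t : ℕ) : ℝ) + t := this
  _ ≤ ((t.factorial : ℝ) * (n : ℝ)) ^ ((1 : ℝ) / (t : ℝ)) + t := by linarith

noncomputable def epsA (m t : ℕ) (a : ℕ → ZMod 2) : ℕ → ZMod 2
  | 0 => 1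
  | d + 1 => a (t - (d + 1)) - ∑ e ∈ (Finset.range (d + 1)).attach,
      epsA m t a e.1 * ((m - (t - (d + 1))).choose (d + 1 - e.1))
  decreasing_by exact Finset.mem_range.mp e.2

lemma epsA_zero (m t : ℕ) (a : ℕ → ZMod 2) : epsA m t a 0 = 1 := by rw [epsA]

lemma epsA_sum (m t : ℕ) (a : ℕ → ZMod 2) (hat : a t = 1) (d : ℕ) (hd : d ≤ t) :
    ∑ e ∈ Finset.range (d + 1), epsA m t a e * ((m - (t - d)).choose (d - e)) = a (t - d) := by
  cases d with
  | zero => simp [epsA_zero, hat]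
  | succ d =>
    rw [Finset.sum_range_succ]
    have hlast : epsA m t a (d + 1) = a (t - (d + 1)) - ∑ e ∈ Finset.range (d + 1),
        epsA m t a e * ((m - (t - (d + 1))).choose (d + 1 - e)) := by
      rw [epsA]
      congr 1
      rw [← Finset.sum_attach (Finset.range (d + 1))
        (fun e => epsA m t a e * ((m - (t - (d + 1))).choose (d + 1 - e)))]
    rw [Nat.sub_self, Nat.choose_zero_right, Nat.cast_one, mul_one, hlast]
    ring

/-- number of supersets of `I` of size `j` in `Fin m` -/
lemma count_supersets {m : ℕ} (I : Finset (Fin m)) (j : ℕ) :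
    (Finset.univ.filter fun T : Finset (Fin m) => I ⊆ T ∧ T.card = j).card
      = if I.card ≤ j then (m - I.card).choose (j - I.card) else 0 := by
  by_cases h : I.card ≤ j
  · rw [if_pos h]
    have : (Finset.univ.filter fun T : Finset (Fin m) => I ⊆ T ∧ T.card = j).card
        = ((Iᶜ).powersetCard (j - I.card)).card := by
      apply Finset.card_bij' (fun T _ => T \ I) (fun U _ => U ∪ I)
      · intro T hT
        rw [Finset.mem_filter] at hT
        rw [Finset.mem_powersetCard]
        refine ⟨fun x hx => ?_, ?_⟩
        · rw [Finset.mem_sdiff] at hx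
          rw [Finset.mem_compl]
          exact hx.2
        · rw [Finset.card_sdiff_of_subset hT.2.1, hT.2.2]
      · intro U hU
        rw [Finset.mem_powersetCard] at hU
        have hdisj : Disjoint U I := by
          rw [Finset.disjoint_left]
          intro x hxU hxI
          have := hU.1 hxU
          rw [Finset.mem_compl] at this
          exact this hxI
        rw [Finset.mem_filter]
        refine ⟨Finset.mem_univ _, Finset.subset_union_right, ?_⟩
        rw [Finset.card_union_of_disjoint hdisj, hU.2]
        omega
      · intro T hT
        rw [Finset.mem_filter] at hT
        exact Finset.sdiff_union_of_subset hT.2.1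
      · intro U hU
        rw [Finset.mem_powersetCard] at hU
        apply Finset.union_sdiff_cancel_right
        rw [Finset.disjoint_left]
        intro x hxU hxI
        have := hU.1 hxU
        rw [Finset.mem_compl] at this
        exact this hxI
    rw [this, Finset.card_powersetCard, Finset.card_compl, Fintype.card_fin]
  · rw [if_neg h]
    rw [Finset.card_eq_zero, Finset.filter_eq_empty_iff]
    intro T _
    rintro ⟨hsub, hcard⟩
    exact h (hcard ▸ Finset.card_le_card hsub)

lemma mem_inf_fun {ι γ : Type*} [DecidableEq ι] [DecidableEq γ] [Fintype γ] (S : Finset ι)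
    (f : ι → Finset γ) (x : γ) : x ∈ S.inf f ↔ ∀ b ∈ S, x ∈ f b := by
  induction S using Finset.induction with
  | empty => simp
  | insert h ih => simp_all [Finset.inf_insert]

lemma count_subtype {m : ℕ} (J : Finset ℕ) (I : Finset (Fin m)) :
    (Finset.univ.filter fun T : {T : Finset (Fin m) // T.card ∈ J} => I ⊆ T.1).card
      = ∑ j ∈ J, if I.card ≤ j then (m - I.card).choose (j - I.card) else 0 := by
  have step1 : (Finset.univ.filter fun T : {T : Finset (Fin m) // T.card ∈ J} => I ⊆ T.1).card
      = (Finset.univ.filter fun T : Finset (Fin m) => I ⊆ T ∧ T.card ∈ J).card := by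
    apply Finset.card_bij (fun T _ => T.1)
    · intro T hT
      rw [Finset.mem_filter] at hT ⊢
      exact ⟨Finset.mem_univ _, hT.2, T.2⟩
    · intro T₁ _ T₂ _ h
      exact Subtype.ext h
    · intro U hU
      rw [Finset.mem_filter] at hU
      exact ⟨⟨U, hU.2.2⟩, Finset.mem_filter.mpr ⟨Finset.mem_univ _, hU.2.1⟩, rfl⟩
  rw [step1, Finset.card_eq_sum_card_fiberwise
    (f := fun T : Finset (Fin m) => T.card) (t := J)
    (fun T hT => (Finset.mem_filter.mp hT).2.2)]
  apply Finset.sum_congr rfl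
  intro j hj
  rw [← count_supersets I j]
  congr 1
  ext T
  simp only [Finset.mem_filter, Finset.mem_univ, true_and]
  constructor
  · rintro ⟨⟨h1, _⟩, h3⟩; exact ⟨h1, h3⟩
  · rintro ⟨h1, h2⟩; exact ⟨⟨h1, h2 ▸ hj⟩, h2⟩

lemma inf_star {m : ℕ} (J : Finset ℕ) (I : Finset (Fin m)) :
    I.inf (fun i => Finset.univ.filter fun T : {T : Finset (Fin m) // T.card ∈ J} => i ∈ T.1)
      = Finset.univ.filter fun T : {T : Finset (Fin m) // T.card ∈ J} => I ⊆ T.1 := by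
  ext T
  rw [mem_inf_fun, Finset.mem_filter]
  simp only [Finset.mem_filter, Finset.mem_univ, true_and]
  constructor
  · intro h x hx; exact (h x hx)
  · intro h i hi; exact h hi

lemma inf_map_comm {ι γ β : Type*} [DecidableEq γ] [Fintype γ] [DecidableEq β] [Fintype β]
    (e : γ ↪ β) (f : ι → Finset γ) (I : Finset ι) (hI : I.Nonempty) :
    I.inf (fun i => (f i).map e) = (I.inf f).map e := by
  induction hI using Finset.Nonempty.cons_induction with
  | singleton a => simp
  | cons a s ha hs ih =>
    rw [Finset.inf_cons, Finset.inf_cons, ih]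
    rw [Finset.inf_eq_inter, Finset.inf_eq_inter, ← Finset.map_inter]

lemma zmod2_ite_eq_mul (z : ZMod 2) (x : ZMod 2) : (if z = 1 then x else 0) = z * x := by
  have hz : z = 0 ∨ z = 1 := by revert z; decide
  rcases hz with h | h <;> simp [h]

lemma parity_count (m t : ℕ) (ht : 1 ≤ t) (a : ℕ → ZMod 2) (hat : a t = 1)
    (h0 : ∀ c, t < c → a c = 0) (c : ℕ) (hc : 1 ≤ c) :
    ((∑ j ∈ (Finset.Icc 1 t).filter (fun j => epsA m t a (t - j) = 1),
        if c ≤ j then (m - c).choose (j - c) else 0 : ℕ) : ZMod 2) = a c := by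
  rw [Nat.cast_sum]
  rw [Finset.sum_filter]
  by_cases hct : c ≤ t
  · have key : ∀ j ∈ Finset.Icc 1 t,
        (if epsA m t a (t - j) = 1 then ((if c ≤ j then (m - c).choose (j - c) else 0 : ℕ) : ZMod 2) else 0)
          = epsA m t a (t - j) * (if c ≤ j then ((m - c).choose (j - c) : ZMod 2) else 0) := by
      intro j _
      rw [zmod2_ite_eq_mul]
      congr 1
      split <;> simp
    rw [Finset.sum_congr rfl key]
    have hsub : Finset.Icc c t ⊆ Finset.Icc 1 t := by
      apply Finset.Icc_subset_Icc_left hc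
    rw [← Finset.sum_subset hsub (fun j hj hjn => by
      have : ¬ c ≤ j := by
        rw [Finset.mem_Icc] at hj
        rw [Finset.mem_Icc] at hjn
        omega
      rw [if_neg this, mul_zero])]
    have reindex : ∑ j ∈ Finset.Icc c t, epsA m t a (t - j) *
        (if c ≤ j then ((m - c).choose (j - c) : ZMod 2) else 0)
        = ∑ e ∈ Finset.range (t - c + 1), epsA m t a e * ((m - (t - (t - c))).choose (t - c - e)) := by
      apply Finset.sum_nbij' (i := fun j => t - j) (j := fun e => t - e)
      · intro j hj
        rw [Finset.mem_Icc] at hj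
        rw [Finset.mem_range]
        omega
      · intro e he
        rw [Finset.mem_range] at he
        rw [Finset.mem_Icc]
        omega
      · intro j hj
        rw [Finset.mem_Icc] at hj
        omega
      · intro e he
        rw [Finset.mem_range] at he
        omega
      · intro j hj
        rw [Finset.mem_Icc] at hj
        rw [if_pos hj.1, show m - (t - (t - c)) = m - c from by omega,
          show t - c - (t - j) = j - c from by omega]
    rw [reindex, epsA_sum m t a hat (t - c) (by omega)]
    congr 1
    omega
  · have : ∀ j ∈ Finset.Icc 1 t,
        (if epsA m t a (t - j) = 1 then ((if c ≤ j then (m - c).choose (j - c) else 0 : ℕ) : ZMod 2) else 0) = 0 := by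
      intro j hj
      rw [Finset.mem_Icc] at hj
      have : ¬ c ≤ j := by omega
      rw [if_neg this]
      simp
    rw [Finset.sum_congr rfl this, Finset.sum_const_zero, h0 c (by omega)]

lemma card_subtype_cardmem {m : ℕ} (J : Finset ℕ) (hJ : ∀ j ∈ J, 1 ≤ j) :
    Fintype.card {T : Finset (Fin m) // T.card ∈ J} = ∑ j ∈ J, m.choose j := by
  rw [Fintype.card_subtype]
  rw [Finset.card_eq_sum_card_fiberwise (f := fun T : Finset (Fin m) => T.card) (t := J)
    (s := Finset.univ.filter (fun T : Finset (Fin m) => T.card ∈ J))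
    (fun T hT => (Finset.mem_filter.mp hT).2)]
  apply Finset.sum_congr rfl
  intro j hj
  have : (Finset.filter (fun T : Finset (Fin m) => T.card = j)
      (Finset.filter (fun T : Finset (Fin m) => T.card ∈ J) Finset.univ))
      = Finset.univ.powersetCard j := by
    rw [Finset.powersetCard_eq_filter, Finset.powerset_univ]
    ext T
    simp only [Finset.mem_filter, Finset.mem_univ, true_and]
    constructor
    · rintro ⟨_, h⟩; exact h
    · intro h; exact ⟨h ▸ hj, h⟩
  rw [this, Finset.card_powersetCard, Finset.card_univ, Fintype.card_fin]

lemma construction_le_fMax (t k m n : ℕ) (ht : 1 ≤ t) (hm : t + 1 ≤ m) (hk : 2 * t ≤ k)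
    (α : Fin k → ZMod 2) (hat : α ⟨t - 1, (by omega : t - 1 < 2 * t).trans_le hk⟩ = 1)
    (h0 : ∀ i : Fin k, t ≤ i.1 → α i = 0)
    (hn : ∑ j ∈ Finset.Icc 1 t, m.choose j ≤ n) :
    m ≤ fMax k n α := by
  classical
  set a : ℕ → ZMod 2 := fun c => if h : 1 ≤ c ∧ c ≤ k then α ⟨c - 1, by omega⟩ else 0 with ha
  have hat' : a t = 1 := by
    rw [ha]
    simp only
    rw [dif_pos ⟨ht, by omega⟩]
    exact hat
  have h0' : ∀ c, t < c → a c = 0 := by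
    intro c hc
    rw [ha]
    simp only
    by_cases hck : c ≤ k
    · rw [dif_pos ⟨by omega, hck⟩]
      exact h0 _ (by simp; omega)
    · rw [dif_neg (by omega)]
  set J : Finset ℕ := (Finset.Icc 1 t).filter (fun j => epsA m t a (t - j) = 1) with hJ
  have hJsub : J ⊆ Finset.Icc 1 t := Finset.filter_subset _ _
  have htJ : t ∈ J := by
    rw [hJ, Finset.mem_filter]
    exact ⟨Finset.mem_Icc.mpr ⟨ht, le_refl t⟩, by rw [Nat.sub_self]; exact epsA_zero m t a⟩
  -- ground type
  have hcardγ : Fintype.card {T : Finset (Fin m) // T.card ∈ J} ≤ n := by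
    rw [card_subtype_cardmem J (fun j hj => (Finset.mem_Icc.mp (hJsub hj)).1)]
    exact le_trans (Finset.sum_le_sum_of_subset hJsub) hn
  obtain ⟨e⟩ : Nonempty ({T : Finset (Fin m) // T.card ∈ J} ↪ Fin n) :=
    Function.Embedding.nonempty_of_card_le (by rw [Fintype.card_fin]; exact hcardγ)
  set star : Fin m → Finset {T : Finset (Fin m) // T.card ∈ J} :=
    fun i => Finset.univ.filter fun T => i ∈ T.1 with hstar
  -- star is injective
  have hstar_inj : Function.Injective star := by
    intro i j hij
    by_contra hne
    have hcard2 : ({i, j} : Finset (Fin m)).card ≤ 2 := Finset.card_insert_le _ _ |>.trans (by simp)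
    have hge : t - 1 ≤ (Finset.univ \ ({i, j} : Finset (Fin m))).card := by
      rw [Finset.card_sdiff_of_subset (Finset.subset_univ _), Finset.card_univ, Fintype.card_fin]
      omega
    obtain ⟨s, hs, hscard⟩ := Finset.exists_subset_card_eq hge
    have his : i ∉ s := fun h => by
      have := hs h
      rw [Finset.mem_sdiff] at this
      exact this.2 (by simp)
    have hjs : j ∉ s := fun h => by
      have := hs h
      rw [Finset.mem_sdiff] at this
      exact this.2 (by simp)
    set T := insert i s with hT
    have hTcard : T.card = t := by
      rw [hT, Finset.card_insert_of_notMem his, hscard]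
      omega
    have hTJ : T.card ∈ J := hTcard ▸ htJ
    have hmemi : (⟨T, hTJ⟩ : {T : Finset (Fin m) // T.card ∈ J}) ∈ star i := by
      rw [hstar, Finset.mem_filter]
      exact ⟨Finset.mem_univ _, Finset.mem_insert_self i s⟩
    have hmemj : (⟨T, hTJ⟩ : {T : Finset (Fin m) // T.card ∈ J}) ∉ star j := by
      rw [hstar, Finset.mem_filter]
      rintro ⟨-, hjT⟩
      have hjT' : j ∈ insert i s := hjT
      rcases Finset.mem_insert.mp hjT' with h | h
      · exact hne h.symm
      · exact hjs h
    rw [hij] at hmemi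
    exact hmemj hmemi
  set B : Fin m → Finset (Fin n) := fun i => (star i).map e with hB
  have hB_inj : Function.Injective B := by
    intro i j hij
    apply hstar_inj
    exact Finset.map_injective e hij
  set G : Finset (Finset (Fin n)) := Finset.image B Finset.univ with hG
  have hGcard : G.card = m := by
    rw [hG, Finset.card_image_of_injective _ hB_inj, Finset.card_univ, Fintype.card_fin]
  have hGint : IsIntersecting k n α G := by
    intro ℓ S hS hcS
    set I : Finset (Fin m) := Finset.univ.filter fun i => B i ∈ S with hI
    have hSI : S = I.image B := by
      apply Finset.Subset.antisymm
      · intro F hF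
        have hFG := hS hF
        rw [hG, Finset.mem_image] at hFG
        obtain ⟨i, -, rfl⟩ := hFG
        rw [Finset.mem_image]
        exact ⟨i, Finset.mem_filter.mpr ⟨Finset.mem_univ _, hF⟩, rfl⟩
      · intro F hF
        rw [Finset.mem_image] at hF
        obtain ⟨i, hi, rfl⟩ := hF
        exact (Finset.mem_filter.mp hi).2
    have hIcard : I.card = ℓ.1 + 1 := by
      rw [hSI, Finset.card_image_of_injective _ hB_inj] at hcS
      exact hcS
    have hIne : I.Nonempty := Finset.card_pos.mp (by omega)
    have hinf : S.inf id = ((I.inf star).map e) := by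
      rw [hSI, Finset.inf_image]
      have : (id ∘ B) = fun i => (star i).map e := by
        funext i; rfl
      rw [this]
      exact inf_map_comm e star I hIne
    have hinfcard : (S.inf id).card = ∑ j ∈ J, if I.card ≤ j then (m - I.card).choose (j - I.card) else 0 := by
      rw [hinf, Finset.card_map, inf_star J I, count_subtype J I]
    rw [hinfcard, hIcard]
    have := parity_count m t ht a hat' h0' (ℓ.1 + 1) (by omega)
    rw [← hJ] at this
    rw [this, ha]
    simp only
    rw [dif_pos ⟨by omega, by omega⟩]
    congr 1
  have := le_fMax k n α G hGint
  omega

def phi (t M : ℕ) : ℕ := ∑ j ∈ Finset.Icc 1 t, M.choose j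

lemma le_phi {t M : ℕ} (ht : 1 ≤ t) : M ≤ phi t M := by
  have h1 : (1 : ℕ) ∈ Finset.Icc 1 t := Finset.mem_Icc.mpr ⟨le_refl 1, ht⟩
  calc M = M.choose 1 := (Nat.choose_one_right M).symm
  _ ≤ phi t M := Finset.single_le_sum (fun j _ => Nat.zero_le _) h1

lemma phi_zero_le (t n : ℕ) : phi t 0 ≤ n := by
  have : phi t 0 = 0 := by
    apply Finset.sum_eq_zero
    intro j hj
    rw [Finset.mem_Icc] at hj
    exact Nat.choose_eq_zero_of_lt (by omega)
  omega

lemma fact_phi_le (t M : ℕ) (ht : 1 ≤ t) (hM : 1 ≤ M) :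
    t.factorial * phi t M ≤ M ^ t + (t * t.factorial) * M ^ (t - 1) := by
  have hsplit : phi t M = M.choose t + ∑ j ∈ Finset.Icc 1 (t - 1), M.choose j := by
    rw [phi]
    rw [show Finset.Icc 1 t = insert t (Finset.Icc 1 (t - 1)) from by
      ext x; simp [Finset.mem_Icc, Finset.mem_insert]; omega]
    rw [Finset.sum_insert (by rw [Finset.mem_Icc]; omega)]
  have h1 : t.factorial * M.choose t ≤ M ^ t := by
    rw [mul_comm, ← descFactorial_eq_choose_mul]
    exact Nat.descFactorial_le_pow M t
  have h2 : ∀ j ∈ Finset.Icc 1 (t - 1), M.choose j ≤ M ^ (t - 1) := by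
    intro j hj
    rw [Finset.mem_Icc] at hj
    calc M.choose j ≤ M ^ j := Nat.choose_le_pow M j
    _ ≤ M ^ (t - 1) := Nat.pow_le_pow_right hM hj.2
  have h3 : ∑ j ∈ Finset.Icc 1 (t - 1), M.choose j ≤ (t - 1) * M ^ (t - 1) := by
    calc ∑ j ∈ Finset.Icc 1 (t - 1), M.choose j ≤ ∑ _j ∈ Finset.Icc 1 (t - 1), M ^ (t - 1) :=
      Finset.sum_le_sum h2
    _ = (t - 1) * M ^ (t - 1) := by rw [Finset.sum_const, Nat.card_Icc, smul_eq_mul,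
          show t - 1 + 1 - 1 = t - 1 from by omega]
  calc t.factorial * phi t M
      = t.factorial * M.choose t + t.factorial * ∑ j ∈ Finset.Icc 1 (t - 1), M.choose j := by
        rw [hsplit]; ring
  _ ≤ M ^ t + t.factorial * ((t - 1) * M ^ (t - 1)) := by
        apply Nat.add_le_add h1
        exact Nat.mul_le_mul_left _ h3
  _ ≤ M ^ t + (t * t.factorial) * M ^ (t - 1) := by
        apply Nat.add_le_add_left
        have : t.factorial * ((t - 1) * M ^ (t - 1)) = (t - 1) * t.factorial * M ^ (t - 1) := by ring
        rw [this]
        apply Nat.mul_le_mul_right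
        apply Nat.mul_le_mul_right
        omega

lemma X_le_of_lt (t m n : ℕ) (ht : 1 ≤ t)
    (h : t.factorial * n < (m + 1) ^ t + (t * t.factorial) * (m + 1) ^ (t - 1)) :
    ((t.factorial : ℝ) * n) ^ ((1 : ℝ) / t) ≤ (m : ℝ) + 1 + (t * t.factorial : ℕ) := by
  set D : ℕ := t * t.factorial with hD
  set M : ℝ := (m : ℝ) + 1 with hM
  have hM1 : (1 : ℝ) ≤ M := by rw [hM]; have : (0:ℝ) ≤ (m:ℝ) := Nat.cast_nonneg m; linarith
  have hM0 : (0 : ℝ) < M := by linarith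
  have hcast : ((t.factorial : ℝ) * n) ≤ M ^ t + D * M ^ (t - 1) := by
    have := h.le
    calc ((t.factorial : ℝ) * n) = ((t.factorial * n : ℕ) : ℝ) := by push_cast; ring
    _ ≤ (((m + 1) ^ t + D * (m + 1) ^ (t - 1) : ℕ) : ℝ) := by exact_mod_cast this
    _ = M ^ t + D * M ^ (t - 1) := by push_cast; ring
  have hMpow : M ^ (t - 1) = M ^ t / M := by
    rw [eq_div_iff (ne_of_gt hM0), ← pow_succ]
    congr 1
    omega
  have hfact : M ^ t + D * M ^ (t - 1) = M ^ t * (1 + D / M) := by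
    rw [hMpow]; field_simp
  have hbase1 : (1 : ℝ) ≤ 1 + (D : ℝ) / M := by
    have : (0:ℝ) ≤ (D : ℝ) / M := by positivity
    linarith
  have h1t : (1 : ℝ) / t ≤ 1 := by
    rw [div_le_one (by exact_mod_cast ht : (0:ℝ) < t)]
    exact_mod_cast ht
  have step : ((t.factorial : ℝ) * n) ^ ((1 : ℝ) / t) ≤ (M ^ t * (1 + D / M)) ^ ((1 : ℝ) / t) := by
    apply Real.rpow_le_rpow (by positivity) (hfact ▸ hcast) (by positivity)
  have split : (M ^ t * (1 + D / M)) ^ ((1 : ℝ) / t)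
      = (M ^ t) ^ ((1 : ℝ) / t) * (1 + D / M) ^ ((1 : ℝ) / t) :=
    Real.mul_rpow (by positivity) (by positivity)
  have hMt : (M ^ t) ^ ((1 : ℝ) / t) = M := by
    rw [← Real.rpow_natCast M t, ← Real.rpow_mul (le_of_lt hM0)]
    rw [mul_one_div, div_self (by exact_mod_cast (by omega : t ≠ 0) : (t : ℝ) ≠ 0)]
    exact Real.rpow_one M
  have hsecond : (1 + (D : ℝ) / M) ^ ((1 : ℝ) / t) ≤ 1 + D / M := by
    calc (1 + (D : ℝ) / M) ^ ((1 : ℝ) / t) ≤ (1 + (D : ℝ) / M) ^ (1 : ℝ) :=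
      Real.rpow_le_rpow_of_exponent_le hbase1 h1t
    _ = 1 + D / M := Real.rpow_one _
  calc ((t.factorial : ℝ) * n) ^ ((1 : ℝ) / t) ≤ (M ^ t) ^ ((1 : ℝ) / t) * (1 + D / M) ^ ((1 : ℝ) / t) := by
        rw [← split]; exact step
  _ = M * (1 + D / M) ^ ((1 : ℝ) / t) := by rw [hMt]
  _ ≤ M * (1 + D / M) := by
        apply mul_le_mul_of_nonneg_left hsecond (le_of_lt hM0)
  _ = M + D := by field_simp
  _ = (m : ℝ) + 1 + D := by rw [hM]

theorem stmt0 (t k : ℕ) (ht : 1 ≤ t) (hk : 2 * t ≤ k) (α : Fin k → ZMod 2)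
    (hat : α ⟨t - 1, by omega⟩ = 1)
    (h0 : ∀ i : Fin k, t ≤ i.1 → α i = 0) :
    Tendsto (fun n : ℕ => (fMax k n α : ℝ) /
      (((t.factorial : ℝ) * (n : ℝ)) ^ ((1 : ℝ) / (t : ℝ)))) atTop (nhds 1) := by
  have htR : (0 : ℝ) < t := by exact_mod_cast ht
  have hfact_pos : (0 : ℝ) < (t.factorial : ℝ) := by
    exact_mod_cast Nat.factorial_pos t
  set X : ℕ → ℝ := fun n => ((t.factorial : ℝ) * n) ^ ((1 : ℝ) / (t : ℝ)) with hXdef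
  have hXtend : Tendsto X atTop atTop := by
    have h1 : Tendsto (fun n : ℕ => (t.factorial : ℝ) * n) atTop atTop :=
      (tendsto_natCast_atTop_atTop).const_mul_atTop hfact_pos
    have h2 := (tendsto_rpow_atTop (y := (1 : ℝ) / (t : ℝ)) (by positivity)).comp h1
    exact h2
  set c₁ : ℝ := 1 + ((t * t.factorial : ℕ) : ℝ) with hc₁
  have hL : Tendsto (fun n => 1 - c₁ / X n) atTop (nhds 1) := by
    have := Filter.Tendsto.div_atTop (tendsto_const_nhds (x := c₁)) hXtend
    have h2 := tendsto_const_nhds (x := (1:ℝ)) |>.sub this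
    simpa using h2
  have hU : Tendsto (fun n => 1 + (t : ℝ) / X n) atTop (nhds 1) := by
    have := Filter.Tendsto.div_atTop (tendsto_const_nhds (x := (t:ℝ))) hXtend
    have h2 := tendsto_const_nhds (x := (1:ℝ)) |>.add this
    simpa using h2
  apply tendsto_of_tendsto_of_tendsto_of_le_of_le' hL hU
  · -- lower bound eventually
    filter_upwards [eventually_ge_atTop (max 1 (phi t (t + 1)))] with n hn
    have hn1 : 1 ≤ n := le_trans (le_max_left _ _) hn
    have hnphi : phi t (t + 1) ≤ n := le_trans (le_max_right _ _) hn
    have hnR : (1 : ℝ) ≤ (n : ℝ) := by exact_mod_cast hn1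
    have hX0 : 0 < X n := by
      apply Real.rpow_pos_of_pos
      have : (0 : ℝ) < (n : ℝ) := by linarith
      positivity
    have hbdd : BddAbove {M | phi t M ≤ n} := ⟨n, fun M hM => le_trans (le_phi ht) hM⟩
    set m := sSup {M | phi t M ≤ n} with hm
    have hmem : m ∈ {M | phi t M ≤ n} := Nat.sSup_mem ⟨0, phi_zero_le t n⟩ hbdd
    have hm_ge : t + 1 ≤ m := le_csSup hbdd hnphi
    have hlt : n < phi t (m + 1) := by
      by_contra hcon
      have h1 : phi t (m + 1) ≤ n := by omega
      have := le_csSup hbdd h1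
      omega
    have hfm : m ≤ fMax k n α :=
      construction_le_fMax t k m n ht (by omega) hk α hat h0 hmem
    have hXle : X n ≤ (m : ℝ) + 1 + ((t * t.factorial : ℕ) : ℝ) := by
      apply X_le_of_lt t m n ht
      calc t.factorial * n < t.factorial * phi t (m + 1) :=
        mul_lt_mul_of_pos_left hlt (Nat.factorial_pos t)
      _ ≤ (m + 1) ^ t + (t * t.factorial) * (m + 1) ^ (t - 1) := fact_phi_le t (m + 1) ht (by omega)
    have hfmR : (m : ℝ) ≤ (fMax k n α : ℝ) := by exact_mod_cast hfm
    have hXc : X n - c₁ ≤ (fMax k n α : ℝ) := by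
      rw [hc₁]
      linarith
    calc 1 - c₁ / X n = (X n - c₁) / X n := by
          rw [sub_div, div_self hX0.ne']
    _ ≤ (fMax k n α : ℝ) / X n := by gcongr
  · -- upper bound eventually
    filter_upwards [eventually_ge_atTop 1] with n hn1
    have hnR : (1 : ℝ) ≤ (n : ℝ) := by exact_mod_cast hn1
    have hX0 : 0 < X n := by
      apply Real.rpow_pos_of_pos
      have : (0 : ℝ) < (n : ℝ) := by linarith
      positivity
    have hb := fMax_le_bound t k n ht hk α hat h0
    have hb' : (fMax k n α : ℝ) ≤ X n + t := hb
    calc (fMax k n α : ℝ) / X n ≤ (X n + t) / X n := by gcongr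
    _ = 1 + (t : ℝ) / X n := by
        rw [add_div, div_self hX0.ne']
end

section
/- Let s ≥ 1 and let m ≥ s + 1 be an integer with m ≡ s − 1 (mod 2^{φ(s)+1}), where φ(s) is the exponent of 2 in s!. For each j ∈ [m] let E_j = { e : e is an s-element subset of [m] with j ∈ e }. Then for any ℓ ≥ 1 and any pairwise distinct indices j_1,…,j_ℓ ∈ [m], the cardinality |E_{j_1} ∩ ⋯ ∩ E_{j_ℓ}| is odd if ℓ = s and even if ℓ ≠ s. Equivalently, the family {E_1,…,E_m} is ε_s-intersecting modulo 2, where ε_s ∈ F_2^m has a 1 only in position s. -/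
open Finset

lemma count_supersets_s2 {α : Type*} [Fintype α] [DecidableEq α] (T : Finset α) (s : ℕ)
    (hTs : T.card ≤ s) :
    (Finset.univ.filter (fun e : Finset α => e.card = s ∧ T ⊆ e)).card
      = (Fintype.card α - T.card).choose (s - T.card) := by
  rw [show (Fintype.card α - T.card) = Tᶜ.card from (Finset.card_compl T).symm,
    ← Finset.card_powersetCard (s - T.card) Tᶜ]
  apply Finset.card_nbij' (fun e => e \ T) (fun u => u ∪ T)
  · intro e he
    simp only [Finset.mem_coe, mem_filter, mem_univ, true_and] at he
    simp only [Finset.mem_coe, Finset.mem_powersetCard]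
    constructor
    · intro x hx; simp only [Finset.mem_sdiff] at hx; simp [hx.2]
    · rw [Finset.card_sdiff_of_subset he.2, he.1]
  · intro u hu
    simp only [Finset.mem_coe, Finset.mem_powersetCard] at hu
    simp only [Finset.mem_coe, mem_filter, mem_univ, true_and]
    have hdisj : Disjoint u T := by
      refine Finset.disjoint_left.mpr fun x hx hxT => ?_
      have := hu.1 hx; simp at this; exact this hxT
    constructor
    · rw [Finset.card_union_of_disjoint hdisj, hu.2]
      have : T.card ≤ Fintype.card α := Finset.card_le_univ T
      have hc : Tᶜ.card = Fintype.card α - T.card := by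
        rw [Finset.card_compl]
      omega
    · exact Finset.subset_union_right
  · intro e he
    simp only [Finset.mem_coe, mem_filter, mem_univ, true_and] at he
    exact Finset.sdiff_union_of_subset he.2
  · intro u hu
    simp only [Finset.mem_coe, Finset.mem_powersetCard] at hu
    have hdisj : Disjoint u T := by
      refine Finset.disjoint_left.mpr fun x hx hxT => ?_
      have := hu.1 hx; simp at this; exact this hxT
    exact Finset.union_sdiff_cancel_right hdisj

lemma choose_even_aux (s m ℓ : ℕ) (hm : s + 1 ≤ m)
    (hmod : m ≡ s - 1 [MOD 2 ^ ((Nat.factorization s.factorial) 2 + 1)])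
    (hℓ : 1 ≤ ℓ) (hℓs : ℓ < s) : (m - ℓ).choose (s - ℓ) % 2 = 0 := by
  set φ := (Nat.factorization s.factorial) 2 with hφ
  have hdvd1 : 2 ^ (φ + 1) ∣ m - (s - 1) :=
    (Nat.modEq_iff_dvd' (by omega)).mp hmod.symm
  have heq : m - (s - 1) = m - s + 1 := by omega
  have hsd : s - ℓ = (s - ℓ - 1) + 1 := by omega
  have heq2 : m - ℓ - (s - ℓ - 1) = m - s + 1 := by omega
  have h2 : (m - s + 1) ∣ (m - ℓ).descFactorial (s - ℓ) := by
    rw [hsd, Nat.descFactorial_succ, heq2]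
    exact dvd_mul_right _ _
  have h3 : 2 ^ (φ + 1) ∣ Nat.factorial (s - ℓ) * (m - ℓ).choose (s - ℓ) := by
    rw [← Nat.descFactorial_eq_factorial_mul_choose]
    exact dvd_trans (heq ▸ hdvd1) h2
  have hCpos : 0 < (m - ℓ).choose (s - ℓ) := Nat.choose_pos (by omega)
  have hne : Nat.factorial (s - ℓ) * (m - ℓ).choose (s - ℓ) ≠ 0 :=
    Nat.mul_ne_zero (Nat.factorial_ne_zero _) (by omega)
  have hle : φ + 1 ≤ (Nat.factorial (s - ℓ) * (m - ℓ).choose (s - ℓ)).factorization 2 :=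
    (Nat.Prime.pow_dvd_iff_le_factorization Nat.prime_two hne).mp h3
  rw [Nat.factorization_mul (Nat.factorial_ne_zero _) (by omega)] at hle
  simp only [Finsupp.coe_add, Pi.add_apply] at hle
  have hfle : (Nat.factorial (s - ℓ)).factorization 2 ≤ φ := by
    have hdvdf : Nat.factorial (s - ℓ) ∣ Nat.factorial s := Nat.factorial_dvd_factorial (by omega)
    exact (Nat.factorization_le_iff_dvd (Nat.factorial_ne_zero _) (Nat.factorial_ne_zero _)).mpr hdvdf 2
  have h1le : 1 ≤ ((m - ℓ).choose (s - ℓ)).factorization 2 := by omega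
  have hdvdC : 2 ∣ (m - ℓ).choose (s - ℓ) := by
    have := (Nat.Prime.pow_dvd_iff_le_factorization Nat.prime_two (by omega)).mpr
      (show 1 ≤ ((m - ℓ).choose (s - ℓ)).factorization 2 from h1le)
    simpa using this
  omega


/-- For `s ≥ 1` and `m ≡ s - 1 (mod 2^(φ(s)+1))` with `m ≥ s + 1`, where `φ(s)` is the
exponent of 2 in `s!`, the intersection of any `ℓ ≥ 1` pairwise distinct members of the family
`E_j = {e ⊆ [m] : |e| = s, j ∈ e}` (indexed by a nonempty `T ⊆ [m]` of distinct indices)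
has odd cardinality iff `ℓ = |T| = s`. -/
theorem stmt2 (s m : ℕ) (hs : 1 ≤ s) (hm : s + 1 ≤ m)
    (hmod : m ≡ s - 1 [MOD 2 ^ ((Nat.factorization s.factorial) 2 + 1)])
    (E : Fin m → Finset (Finset (Fin m)))
    (hE : ∀ j, E j = Finset.univ.filter (fun e : Finset (Fin m) => e.card = s ∧ j ∈ e))
    (T : Finset (Fin m)) (hT : T.Nonempty) :
    (T.inf E).card % 2 = if T.card = s then 1 else 0 := by
  have hinf : T.inf E = Finset.univ.filter
      (fun e : Finset (Fin m) => e.card = s ∧ T ⊆ e) := by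
    ext e
    rw [← Finset.inf'_eq_inf hT E, Finset.mem_inf']
    simp only [hE, Finset.mem_filter, Finset.mem_univ, true_and]
    constructor
    · intro h
      obtain ⟨j, hj⟩ := hT
      exact ⟨(h j hj).1, fun x hx => (h x hx).2⟩
    · intro h j hj
      exact ⟨h.1, h.2 hj⟩
  rcases le_or_gt T.card s with hle | hlt
  · rw [hinf, count_supersets_s2 T s hle]
    have hcard : Fintype.card (Fin m) = m := Fintype.card_fin m
    rw [hcard]
    by_cases h : T.card = s
    · simp [h]
    · have hℓs : T.card < s := lt_of_le_of_ne hle h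
      rw [if_neg h]
      exact choose_even_aux s m T.card hm hmod hT.card_pos hℓs
  · have hempty : T.inf E = ∅ := by
      rw [hinf]
      rw [Finset.filter_eq_empty_iff]
      intro e _
      rintro ⟨hcard, hsub⟩
      have := Finset.card_le_card hsub
      omega
    rw [hempty]
    rw [if_neg (by omega)]
    simp
end

section
/- Let s ≥ 1, let i ∈ {0,1,…,2^s − 1}, and let m ≥ 2^s be an integer with m ≡ i (mod 2^{φ(2^s−1)+1}), where φ(r) is the exponent of 2 in r!. For each j ∈ [m] let Ē_j = { e : e is a (2^s − 1)-element subset of [m] with j ∉ e }. Then for any ℓ ≥ 1 and any pairwise distinct indices j_1,…,j_ℓ ∈ [m], the cardinality |Ē_{j_1} ∩ ⋯ ∩ Ē_{j_ℓ}| = C(m−ℓ, 2^s−1) is odd if ℓ ≡ i + 1 (mod 2^s) and even otherwise. Equivalently, the family {Ē_1,…,Ē_m} is ε̇_{i+1,2^s}-intersecting modulo 2, where ε̇_{i+1,2^s} ∈ F_2^m is the 0-1 vector with 1s exactly in the positions congruent to i+1 modulo 2^s. -/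
lemma lucasL (s : ℕ) : ∀ n : ℕ, n.choose (2 ^ s - 1) % 2 = 1 ↔ n % 2 ^ s = 2 ^ s - 1 := by
  induction s with
  | zero => intro n; simp [Nat.mod_one]
  | succ s ih =>
    intro n
    have hp : Fact (Nat.Prime 2) := ⟨Nat.prime_two⟩
    have h := @Choose.choose_modEq_choose_mod_mul_choose_div_nat n (2 ^ (s + 1) - 1) 2 hp
    have hpow : 2 ^ (s + 1) = 2 * 2 ^ s := by ring
    have hps : 1 ≤ 2 ^ s := Nat.one_le_two_pow
    have hk1 : (2 ^ (s + 1) - 1) % 2 = 1 := by omega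
    have hk2 : (2 ^ (s + 1) - 1) / 2 = 2 ^ s - 1 := by omega
    rw [hk1, hk2, Nat.choose_one_right] at h
    unfold Nat.ModEq at h
    rw [Nat.mul_mod, Nat.mod_mod_of_dvd _ (dvd_refl 2)] at h
    · have hmps : n % 2 ^ (s + 1) = n % 2 + 2 * (n / 2 % 2 ^ s) := by
        rw [hpow]; exact Nat.mod_mul
      have hih := ih (n / 2)
      have ha : n % 2 = 0 ∨ n % 2 = 1 := Nat.mod_two_eq_zero_or_one n
      have hb : (n / 2).choose (2 ^ s - 1) % 2 = 0 ∨ (n / 2).choose (2 ^ s - 1) % 2 = 1 :=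
        Nat.mod_two_eq_zero_or_one _
      have hc : n / 2 % 2 ^ s < 2 ^ s := Nat.mod_lt _ (by positivity)
      rcases ha with ha | ha <;> rcases hb with hb | hb <;>
        rw [ha, hb] at h <;> simp at h <;> omega

/-- For `s ≥ 1`, `0 ≤ i ≤ 2^s - 1` and `m ≡ i (mod 2^(φ(2^s-1)+1))` with `m ≥ 2^s`, where
`φ(r)` is the exponent of 2 in `r!`, the intersection of any `ℓ ≥ 1` pairwise distinct members
of the family `Ē_j = {e ⊆ [m] : |e| = 2^s - 1, j ∉ e}` (indexed by a nonempty `T ⊆ [m]` of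
distinct indices) has odd cardinality iff `ℓ = |T| ≡ i + 1 (mod 2^s)`. -/
theorem stmt4 (s m i : ℕ) (hs : 1 ≤ s) (hi : i < 2 ^ s) (hm : 2 ^ s ≤ m)
    (hmod : m ≡ i [MOD 2 ^ ((Nat.factorization (2 ^ s - 1).factorial) 2 + 1)])
    (E : Fin m → Finset (Finset (Fin m)))
    (hE : ∀ j, E j = Finset.univ.filter (fun e : Finset (Fin m) => e.card = 2 ^ s - 1 ∧ j ∉ e))
    (T : Finset (Fin m)) (hT : T.Nonempty) :
    (T.inf E).card % 2 = if T.card % 2 ^ s = (i + 1) % 2 ^ s then 1 else 0 := by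
  classical
  have hps : 1 ≤ 2 ^ s := Nat.one_le_two_pow
  -- Step 1: identify the intersection
  have h1 : T.inf E = (Tᶜ).powersetCard (2 ^ s - 1) := by
    ext e
    simp only [Finset.mem_inf, hE, Finset.mem_filter, Finset.mem_univ, true_and,
      Finset.mem_powersetCard]
    constructor
    · intro h
      obtain ⟨j, hj⟩ := hT
      exact ⟨fun x hx => Finset.mem_compl.mpr fun hxT => (h x hxT).2 hx, (h j hj).1⟩
    · rintro ⟨hsub, hcard⟩ j hj
      exact ⟨hcard, fun hje => Finset.mem_compl.mp (hsub hje) hj⟩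
  have hTm : T.card ≤ m := by
    simpa using Finset.card_le_univ T
  have h2 : (T.inf E).card = (m - T.card).choose (2 ^ s - 1) := by
    rw [h1, Finset.card_powersetCard, Finset.card_compl, Fintype.card_fin]
  -- Step 2: m ≡ i [MOD 2^s]
  have hfact : s - 1 ≤ (Nat.factorization (2 ^ s - 1).factorial) 2 := by
    rw [← Nat.Prime.pow_dvd_iff_le_factorization Nat.prime_two (Nat.factorial_ne_zero _)]
    refine Nat.dvd_factorial (by positivity) ?_
    have : 2 ^ s = 2 * 2 ^ (s - 1) := by
      rw [← pow_succ']
      congr 1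
      omega
    have : 1 ≤ 2 ^ (s - 1) := Nat.one_le_two_pow
    omega
  have hdvd : (2 : ℕ) ^ s ∣ 2 ^ ((Nat.factorization (2 ^ s - 1).factorial) 2 + 1) :=
    pow_dvd_pow 2 (by omega)
  have hmi : m ≡ i [MOD 2 ^ s] := hmod.of_dvd hdvd
  -- Step 3: parity via Lucas
  set ℓ := T.card with hl
  have hkey : (m - ℓ) % 2 ^ s = 2 ^ s - 1 ↔ ℓ % 2 ^ s = (i + 1) % 2 ^ s := by
    constructor
    · intro h
      have h' : m - ℓ ≡ 2 ^ s - 1 [MOD 2 ^ s] := by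
        unfold Nat.ModEq
        rw [h, Nat.mod_eq_of_lt (by omega)]
      have hm' : (2 ^ s - 1) + ℓ ≡ (2 ^ s - 1) + (i + 1) [MOD 2 ^ s] := by
        calc (2 ^ s - 1) + ℓ ≡ (m - ℓ) + ℓ [MOD 2 ^ s] := (h'.add_right ℓ).symm
          _ = m := by omega
          _ ≡ i [MOD 2 ^ s] := hmi
          _ ≡ i + 2 ^ s [MOD 2 ^ s] := (Nat.modEq_iff_dvd' (by omega)).mpr (by simp)
          _ = (2 ^ s - 1) + (i + 1) := by omega
      exact hm'.add_left_cancel' _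
    · intro h
      have h' : ℓ ≡ i + 1 [MOD 2 ^ s] := h
      have hm' : (m - ℓ) + ℓ ≡ (2 ^ s - 1) + (i + 1) [MOD 2 ^ s] := by
        calc (m - ℓ) + ℓ = m := by omega
          _ ≡ i [MOD 2 ^ s] := hmi
          _ ≡ i + 2 ^ s [MOD 2 ^ s] := (Nat.modEq_iff_dvd' (by omega)).mpr (by simp)
          _ = (2 ^ s - 1) + (i + 1) := by omega
      have := (Nat.ModEq.add_right_cancel h' hm')
      unfold Nat.ModEq at this
      rw [this, Nat.mod_eq_of_lt (by omega)]
  rw [h2]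
  have hL := lucasL s (m - ℓ)
  by_cases hcase : ℓ % 2 ^ s = (i + 1) % 2 ^ s
  · rw [if_pos hcase]
    exact hL.mpr (hkey.mpr hcase)
  · rw [if_neg hcase]
    have : ¬ ((m - ℓ).choose (2 ^ s - 1) % 2 = 1) := fun h => hcase (hkey.mp (hL.mp h))
    omega
end

section
/- For any α = (a_1,…,a_k) ∈ F_2^k with α ≠ 0, if t ∈ [k] is the maximum index such that a_t = 1, then f_α(n) = Ω(n^{1/t}); that is, there is a constant c > 0 such that f_α(n) ≥ c·n^{1/t} for all sufficiently large n. -/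
open Filter
open Finset

section Construction


variable (k : ℕ) (α : Fin k → ZMod 2) (t : ℕ)

noncomputable def aa (ℓ : ℕ) : ZMod 2 := if h : ℓ - 1 < k then α ⟨ℓ-1, h⟩ else 0

noncomputable def yy : ℕ → ZMod 2
  | r => aa k α (t - r) - ∑ s ∈ (Finset.range r).attach,
      ((r.choose s.1 : ZMod 2) * yy s.1)
  decreasing_by exact Finset.mem_range.mp s.2

lemma yy_eq (r : ℕ) : yy k α t r
    = aa k α (t - r) - ∑ s ∈ Finset.range r, (r.choose s : ZMod 2) * yy k α t s := by
  rw [yy, ← Finset.sum_attach (Finset.range r) (fun s => (r.choose s : ZMod 2) * yy k α t s)]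

noncomputable def TT : Finset ℕ :=
  ((Finset.range t).filter (fun r => yy k α t r = 1)).image (fun r => t - r)

lemma TT_subset : ∀ j ∈ TT k α t, 1 ≤ j ∧ j ≤ t := by
  intro j hj
  simp only [TT, mem_image, mem_filter, mem_range] at hj
  obtain ⟨r, ⟨hr, _⟩, rfl⟩ := hj
  omega

lemma t_mem_TT (ht : 1 ≤ t) (hat : aa k α t = 1) : t ∈ TT k α t := by
  simp only [TT, mem_image, mem_filter, mem_range]
  exact ⟨0, ⟨ht, by rw [yy_eq]; simpa using hat⟩, by omega⟩

lemma zmod2_not_one {x : ZMod 2} (h : ¬ x = 1) : x = 0 := by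
  fin_cases x <;> [rfl; exact absurd rfl h]

lemma sum_TT (ℓ' : ℕ) (h1 : 1 ≤ ℓ') (h2 : ℓ' ≤ t) :
    ∑ j ∈ (TT k α t).filter (fun j => ℓ' ≤ j), (((t - ℓ').choose (j - ℓ') : ℕ) : ZMod 2)
      = aa k α ℓ' := by
  have key : (TT k α t).filter (fun j => ℓ' ≤ j)
      = (((Finset.range t).filter (fun r => yy k α t r = 1)).filter (fun r => r ≤ t - ℓ')).image
          (fun r => t - r) := by
    rw [TT, filter_image]
    congr 1
    ext r
    simp only [mem_filter, mem_range]
    constructor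
    · rintro ⟨⟨hr, hy⟩, hl⟩; exact ⟨⟨hr, hy⟩, by omega⟩
    · rintro ⟨⟨hr, hy⟩, hl⟩; exact ⟨⟨hr, hy⟩, by omega⟩
  rw [key, Finset.sum_image (by intro a ha b hb hab; simp only [Finset.mem_coe, mem_filter, mem_range] at ha hb hab; omega)]
  have step : ∀ r ∈ ((Finset.range t).filter (fun r => yy k α t r = 1)).filter (fun r => r ≤ t - ℓ'),
      (((t - ℓ').choose (t - r - ℓ') : ℕ) : ZMod 2) = (((t - ℓ').choose r : ℕ) : ZMod 2) := by
    intro r hr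
    simp only [mem_filter, mem_range] at hr
    have h3 : t - r - ℓ' = (t - ℓ') - r := by omega
    rw [h3, Nat.choose_symm hr.2]
  rw [Finset.sum_congr rfl step]
  have set_eq : ((Finset.range t).filter (fun r => yy k α t r = 1)).filter (fun r => r ≤ t - ℓ')
      = (Finset.range ((t - ℓ')+1)).filter (fun r => yy k α t r = 1) := by
    ext r; simp only [mem_filter, mem_range]
    constructor
    · rintro ⟨⟨hr, hy⟩, hl⟩; exact ⟨by omega, hy⟩
    · rintro ⟨hr, hy⟩; exact ⟨⟨by omega, hy⟩, by omega⟩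
  rw [set_eq]
  have hfilt : ∑ r ∈ (Finset.range ((t-ℓ')+1)).filter (fun r => yy k α t r = 1),
        (((t-ℓ').choose r : ℕ) : ZMod 2)
      = ∑ r ∈ Finset.range ((t-ℓ')+1), (((t-ℓ').choose r : ℕ) : ZMod 2) * yy k α t r := by
    rw [Finset.sum_filter]
    refine Finset.sum_congr rfl fun r _ => ?_
    by_cases h : yy k α t r = 1
    · simp [h]
    · simp [h, zmod2_not_one h]
  rw [hfilt, Finset.sum_range_succ, Nat.choose_self, yy_eq]
  have hteq : t - (t - ℓ') = ℓ' := by omega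
  rw [hteq]
  push_cast
  ring

-- counting supersets lemma (generic)
lemma card_supersets {m : ℕ} (I : Finset (Fin m)) (T : Finset ℕ) :
    (univ.filter (fun A : Finset (Fin m) => I ⊆ A ∧ A.card ∈ T)).card
      = ∑ j ∈ T.filter (fun j => I.card ≤ j), (m - I.card).choose (j - I.card) := by
  classical
  have hbu : univ.filter (fun A : Finset (Fin m) => I ⊆ A ∧ A.card ∈ T)
      = (T.filter (fun j => I.card ≤ j)).biUnion
          (fun j => ((Iᶜ).powersetCard (j - I.card)).image (fun B => B ∪ I)) := by
    ext A
    simp only [mem_filter, mem_univ, true_and, mem_biUnion, mem_image, mem_powersetCard]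
    constructor
    · rintro ⟨hIA, hcard⟩
      refine ⟨A.card, ⟨hcard, card_le_card hIA⟩, A \ I, ⟨?_, ?_⟩, ?_⟩
      · intro x hx; simp only [Finset.mem_sdiff] at hx; simp [hx.2]
      · rw [card_sdiff_of_subset hIA]
      · rw [sdiff_union_self_eq_union, union_eq_left.mpr hIA]
    · rintro ⟨j, ⟨hjT, hj⟩, B, ⟨hBsub, hBcard⟩, rfl⟩
      have hdisj : Disjoint B I := by
        rw [disjoint_left]; intro x hxB hxI
        have := hBsub hxB; simp at this; exact this hxI
      constructor
      · exact subset_union_right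
      · rwa [card_union_of_disjoint hdisj, hBcard, Nat.sub_add_cancel hj]
  rw [hbu, card_biUnion]
  · refine Finset.sum_congr rfl fun j hj => ?_
    simp only [mem_filter] at hj
    rw [card_image_of_injOn, card_powersetCard, card_compl, Fintype.card_fin]
    intro B hB B' hB' hEq
    simp only [Finset.mem_coe, mem_powersetCard] at hB hB'
    have hd : ∀ C : Finset (Fin m), C ⊆ Iᶜ → (C ∪ I) \ I = C := by
      intro C hC
      rw [union_sdiff_right, Finset.sdiff_eq_self_iff_disjoint]
      rw [disjoint_left]; intro x hx hxI
      have := hC hx; simp at this; exact this hxI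
    calc B = (B ∪ I) \ I := (hd B hB.1).symm
      _ = (B' ∪ I) \ I := by rw [show B ∪ I = B' ∪ I from hEq]
      _ = B' := hd B' hB'.1
  · intro j hj j' hj' hne
    simp only [Finset.mem_coe, mem_filter] at hj hj'
    rw [Function.onFun, disjoint_left]
    intro A hA hA'
    simp only [mem_image, mem_powersetCard] at hA hA'
    obtain ⟨B, ⟨hB1, hB2⟩, rfl⟩ := hA
    obtain ⟨B', ⟨hB'1, hB'2⟩, hEq⟩ := hA'
    have dj : ∀ C : Finset (Fin m), C ⊆ Iᶜ → Disjoint C I := by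
      intro C hC; rw [disjoint_left]; intro x hx hxI
      have := hC hx; simp at this; exact this hxI
    have c1 : (B ∪ I).card = j := by
      rw [card_union_of_disjoint (dj B hB1), hB2, Nat.sub_add_cancel hj.2]
    have c2 : (B' ∪ I).card = j' := by
      rw [card_union_of_disjoint (dj B' hB'1), hB'2, Nat.sub_add_cancel hj'.2]
    rw [hEq] at c2
    exact hne (c1 ▸ c2 ▸ rfl)

lemma cast_choose_two (N d r : ℕ) (hd : d < 2^N) (hr : r ≤ d) :
    (((2^N + d).choose r : ℕ) : ZMod 2) = ((d.choose r : ℕ) : ZMod 2) := by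
  rw [Nat.add_choose_eq]
  push_cast
  rw [Finset.sum_eq_single (0, r)]
  · simp
  · rintro ⟨i, j⟩ hmem hne
    have hij : i + j = r := by simpa using hmem
    rcases Nat.eq_zero_or_pos i with hi0 | hipos
    · subst hi0
      have : j = r := by omega
      subst this
      exact absurd rfl hne
    have hi : i ≠ 0 := by omega
    have hiN : i ≠ 2^N := by omega
    have h2 : (2:ℕ) ∣ (2^N).choose i := Nat.Prime.dvd_choose_pow Nat.prime_two hi hiN
    have h3 : (((2^N).choose i : ℕ) : ZMod 2) = 0 :=
      (ZMod.natCast_eq_zero_iff _ _).mpr h2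
    simp [h3]
  · intro h
    exact absurd (Finset.HasAntidiagonal.mem_antidiagonal.mpr (by simp)) h

noncomputable def Fi (k : ℕ) (α : Fin k → ZMod 2) (t : ℕ) (m : ℕ) (i : Fin m) : Finset (Finset (Fin m)) :=
  univ.filter (fun A => i ∈ A ∧ A.card ∈ TT k α t)

lemma Fi_injective {m : ℕ} (ht : 1 ≤ t) (hat : aa k α t = 1) (hm : t + 1 ≤ m) :
    Function.Injective (Fi k α t m) := by
  intro i i' h
  by_contra hne
  have h1 : ({i} : Finset (Fin m)) ⊆ univ.erase i' := by
    simp [Finset.singleton_subset_iff, Finset.mem_erase, hne]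
  have h2 : ({i} : Finset (Fin m)).card ≤ t := by simpa using ht
  have h3 : t ≤ (univ.erase i' : Finset (Fin m)).card := by
    rw [card_erase_of_mem (mem_univ _)]
    simp only [card_univ, Fintype.card_fin]
    omega
  obtain ⟨A, hA1, hA2, hA3⟩ := exists_subsuperset_card_eq h1 h2 h3
  have hmemA : A ∈ Fi k α t m i := by
    simp only [Fi, mem_filter, mem_univ, true_and]
    exact ⟨hA1 (mem_singleton_self i), hA3 ▸ t_mem_TT k α t ht hat⟩
  rw [h] at hmemA
  simp only [Fi, mem_filter, mem_univ, true_and] at hmemA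
  have := hA2 hmemA.1
  simp at this

lemma inf_Fi {m : ℕ} (I : Finset (Fin m)) (hI : I.Nonempty) :
    I.inf (Fi k α t m) = univ.filter (fun A => I ⊆ A ∧ A.card ∈ TT k α t) := by
  ext A
  rw [← Finset.inf'_eq_inf hI, Finset.mem_inf']
  simp only [Fi, mem_filter, mem_univ, true_and]
  constructor
  · intro h
    obtain ⟨i0, hi0⟩ := hI
    exact ⟨fun i hi => (h i hi).1, (h i0 hi0).2⟩
  · rintro ⟨hs, hc⟩ i hi
    exact ⟨hs hi, hc⟩

lemma parity_main (N : ℕ) (ht : 1 ≤ t) (htN : t < 2^N) (hat : aa k α t = 1)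
    (haz : ∀ ℓ', t < ℓ' → aa k α ℓ' = 0) (ℓ' : ℕ) (hℓ : 1 ≤ ℓ')
    (S : Finset (Finset (Finset (Fin (2^N + t)))))
    (hS : S ⊆ univ.image (Fi k α t (2^N + t)))
    (hcard : S.card = ℓ') :
    ((S.inf id).card : ZMod 2) = aa k α ℓ' := by
  obtain ⟨I, hIuniv, hIim⟩ := Finset.subset_image_iff.mp hS
  have hinj : Function.Injective (Fi k α t (2^N + t)) :=
    Fi_injective k α t ht hat (by have := Nat.one_le_two_pow (n := N); omega)
  have hIcard : I.card = ℓ' := by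
    rw [← hcard, ← hIim, card_image_of_injective _ hinj]
  have hInon : I.Nonempty := card_pos.mp (by omega)
  have h1 : S.inf id = I.inf (Fi k α t (2^N + t)) := by
    rw [← hIim, inf_image]
    rfl
  rw [h1, inf_Fi k α t I hInon, card_supersets, hIcard]
  by_cases hcase : ℓ' ≤ t
  · have hsub : 2^N + t - ℓ' = 2^N + (t - ℓ') := by omega
    rw [hsub, Nat.cast_sum]
    have hcongr : ∀ j ∈ (TT k α t).filter (fun j => ℓ' ≤ j),
        (((2^N + (t - ℓ')).choose (j - ℓ') : ℕ) : ZMod 2)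
          = (((t - ℓ').choose (j - ℓ') : ℕ) : ZMod 2) := by
      intro j hj
      have hjt := TT_subset k α t j (mem_filter.mp hj).1
      have hjl := (mem_filter.mp hj).2
      exact cast_choose_two N _ _ (by omega) (by omega)
    rw [Finset.sum_congr rfl hcongr]
    exact sum_TT k α t ℓ' hℓ hcase
  · have hempty : (TT k α t).filter (fun j => ℓ' ≤ j) = ∅ := by
      rw [filter_eq_empty_iff]
      intro j hj
      have := TT_subset k α t j hj
      omega
    rw [hempty]
    simp [haz ℓ' (by omega)]

end Construction

section Transport

variable {β : Type*} [DecidableEq β] [Fintype β] {n : ℕ} (P : Finset β) (f : {x // x ∈ P} ↪ Fin n)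

noncomputable def gmap (A : Finset β) : Finset (Fin n) :=
  (A.subtype (· ∈ P)).map f

lemma gmap_inter (A B : Finset β) :
    gmap P f (A ∩ B) = gmap P f A ∩ gmap P f B := by
  ext x
  simp only [gmap, Finset.mem_map, Finset.mem_subtype, mem_inter]
  constructor
  · rintro ⟨a, ⟨h1, h2⟩, rfl⟩
    exact ⟨⟨a, h1, rfl⟩, ⟨a, h2, rfl⟩⟩
  · rintro ⟨⟨a, h1, rfl⟩, ⟨b, h2, hEq⟩⟩
    obtain rfl : b = a := f.injective hEq
    exact ⟨b, ⟨h1, h2⟩, rfl⟩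

lemma gmap_card (A : Finset β) (hA : ∀ x ∈ A, x ∈ P) :
    (gmap P f A).card = A.card := by
  rw [gmap, card_map]
  have h1 : (A.subtype (· ∈ P)).map (Function.Embedding.subtype _) = A.filter (· ∈ P) :=
    Finset.subtype_map _
  have hcard : (A.subtype (· ∈ P)).card = (A.filter (· ∈ P)).card := by
    rw [← h1, card_map]
  rw [hcard, filter_true_of_mem hA]

lemma gmap_inj (A B : Finset β) (hA : ∀ x ∈ A, x ∈ P) (hB : ∀ x ∈ B, x ∈ P)
    (h : gmap P f A = gmap P f B) : A = B := by
  have hsub : A.subtype (· ∈ P) = B.subtype (· ∈ P) :=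
    Finset.map_injective f h
  ext a
  constructor
  · intro ha
    have h2 : (⟨a, hA a ha⟩ : {x // x ∈ P}) ∈ A.subtype (· ∈ P) := by
      simpa [Finset.mem_subtype] using ha
    rw [hsub] at h2
    simpa [Finset.mem_subtype] using h2
  · intro hb
    have h2 : (⟨a, hB a hb⟩ : {x // x ∈ P}) ∈ B.subtype (· ∈ P) := by
      simpa [Finset.mem_subtype] using hb
    rw [← hsub] at h2
    simpa [Finset.mem_subtype] using h2

lemma gmap_inf (S : Finset (Finset β)) (hne : S.Nonempty) :
    (S.image (gmap P f)).inf id = gmap P f (S.inf id) := by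
  induction hne using Finset.Nonempty.cons_induction with
  | singleton A => simp
  | cons A S hA hS ih =>
    rw [cons_eq_insert, image_insert, inf_insert, inf_insert, ih]
    show gmap P f A ⊓ gmap P f (S.inf id) = gmap P f (A ⊓ S.inf id)
    rw [inf_eq_inter, inf_eq_inter, gmap_inter]

end Transport

lemma aa_fin (k : ℕ) (α : Fin k → ZMod 2) (ℓ : Fin k) : aa k α (ℓ.1 + 1) = α ℓ := by
  simp only [aa, Nat.add_sub_cancel, ℓ.2, dif_pos]

lemma construction (k t : ℕ) (α : Fin k → ZMod 2) (n N : ℕ) (ht : 1 ≤ t) (htN : t < 2^N)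
    (hat : aa k α t = 1) (haz : ∀ ℓ', t < ℓ' → aa k α ℓ' = 0)
    (hn : ((univ : Finset (Finset (Fin (2^N + t)))).filter
      (fun A => A.card ∈ TT k α t)).card ≤ n) :
    ∃ G : Finset (Finset (Fin n)), IsIntersecting k n α G ∧ G.card = 2^N + t := by
  classical
  set m := 2^N + t with hm
  set P : Finset (Finset (Fin m)) := univ.filter (fun A => A.card ∈ TT k α t) with hP
  obtain ⟨f⟩ : Nonempty ({x // x ∈ P} ↪ Fin n) :=
    Function.Embedding.nonempty_of_card_le (by simpa [Fintype.card_coe] using hn)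
  have hFiP : ∀ i : Fin m, ∀ A ∈ Fi k α t m i, A ∈ P := by
    intro i A hA
    simp only [Fi, mem_filter, mem_univ, true_and] at hA
    simp only [hP, mem_filter, mem_univ, true_and]
    exact hA.2
  have hinj : Function.Injective (Fi k α t m) :=
    Fi_injective k α t ht hat (by have := Nat.one_le_two_pow (n := N); omega)
  have hFamP : ∀ B ∈ (univ : Finset (Fin m)).image (Fi k α t m), ∀ A ∈ B, A ∈ P := by
    intro B hB
    simp only [Finset.mem_image, mem_univ, true_and] at hB
    obtain ⟨i, rfl⟩ := hB
    exact hFiP i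
  refine ⟨((univ : Finset (Fin m)).image (Fi k α t m)).image (gmap P f), ?_, ?_⟩
  · intro ℓ S' hS' hcard'
    obtain ⟨S, hSsub, hSim⟩ := Finset.subset_image_iff.mp hS'
    have hSinj : Set.InjOn (gmap P f) S := by
      intro A hA B hB h
      exact gmap_inj P f A B (hFamP A (hSsub hA)) (hFamP B (hSsub hB)) h
    have hScard : S.card = ℓ.1 + 1 := by
      rw [← hcard', ← hSim, card_image_of_injOn hSinj]
    have hSne : S.Nonempty := card_pos.mp (by omega)
    have h1 : S'.inf id = gmap P f (S.inf id) := by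
      rw [← hSim, gmap_inf P f S hSne]
    have hinfP : ∀ x ∈ S.inf id, x ∈ P := by
      obtain ⟨B, hB⟩ := hSne
      intro x hx
      have hle : S.inf id ⊆ B := Finset.le_iff_subset.mp (Finset.inf_le hB)
      exact hFamP B (hSsub hB) x (hle hx)
    rw [h1, gmap_card P f _ hinfP]
    rw [← aa_fin k α ℓ]
    exact parity_main k α t N ht htN hat haz (ℓ.1 + 1) (by omega) S hSsub hScard
  · rw [card_image_of_injOn, card_image_of_injective _ hinj, card_univ, Fintype.card_fin]
    intro A hA B hB h
    exact gmap_inj P f A B (hFamP A hA) (hFamP B hB) h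

lemma fMax_ge (k t : ℕ) (α : Fin k → ZMod 2) (n N : ℕ) (ht : 1 ≤ t) (htN : t < 2^N)
    (hat : aa k α t = 1) (haz : ∀ ℓ', t < ℓ' → aa k α ℓ' = 0)
    (hn : ((univ : Finset (Finset (Fin (2^N + t)))).filter
      (fun A => A.card ∈ TT k α t)).card ≤ n) :
    2^N + t ≤ fMax k n α := by
  obtain ⟨G, hG1, hG2⟩ := construction k t α n N ht htN hat haz hn
  apply le_csSup
  · refine ⟨2^n, ?_⟩
    rintro x ⟨F, _, rfl⟩
    simpa [card_univ, Fintype.card_finset] using Finset.card_le_univ F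
  · exact ⟨G, hG1, hG2⟩

lemma P_card_le (k t m : ℕ) (α : Fin k → ZMod 2) (hm : 1 ≤ m) :
    ((univ : Finset (Finset (Fin m))).filter (fun A => A.card ∈ TT k α t)).card
      ≤ t * m ^ t := by
  classical
  have heq : (univ : Finset (Finset (Fin m))).filter (fun A => A.card ∈ TT k α t)
      = (TT k α t).biUnion (fun j => (univ : Finset (Fin m)).powersetCard j) := by
    ext A
    simp only [mem_filter, mem_univ, true_and, mem_biUnion, Finset.mem_powersetCard_univ]
    constructor
    · intro h; exact ⟨A.card, h, rfl⟩
    · rintro ⟨j, hj, rfl⟩; exact hj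
  rw [heq]
  calc ((TT k α t).biUnion (fun j => (univ : Finset (Fin m)).powersetCard j)).card
      ≤ ∑ j ∈ TT k α t, ((univ : Finset (Fin m)).powersetCard j).card :=
        card_biUnion_le
    _ ≤ ∑ j ∈ TT k α t, m ^ t := by
        refine Finset.sum_le_sum fun j hj => ?_
        rw [card_powersetCard, card_univ, Fintype.card_fin]
        calc m.choose j ≤ m ^ j := Nat.choose_le_pow m j
          _ ≤ m ^ t := Nat.pow_le_pow_right hm (TT_subset k α t j hj).2
    _ = (TT k α t).card * m ^ t := by rw [Finset.sum_const, smul_eq_mul]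
    _ ≤ t * m ^ t := by
        apply Nat.mul_le_mul_right
        calc (TT k α t).card ≤ ((Finset.range t).filter (fun r => yy k α t r = 1)).card :=
              card_image_le
          _ ≤ (Finset.range t).card := card_filter_le _ _
          _ = t := card_range t


theorem stmt6 (k t : ℕ) (ht : 1 ≤ t) (htk : t ≤ k) (α : Fin k → ZMod 2)
    (hat : α ⟨t - 1, by omega⟩ = 1)
    (h0 : ∀ i : Fin k, t ≤ i.1 → α i = 0) :
    ∃ c : ℝ, 0 < c ∧ ∀ᶠ n : ℕ in atTop,
      c * (n : ℝ) ^ ((1 : ℝ) / (t : ℝ)) ≤ (fMax k n α : ℝ) := by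
  have ht0 : (t : ℝ) ≠ 0 := by positivity
  have hxpos : (0:ℝ) < ((t : ℝ) * 2 ^ t)⁻¹ := by positivity
  set x : ℝ := ((t : ℝ) * 2 ^ t)⁻¹ with hxdef
  refine ⟨x ^ ((1:ℝ)/(t:ℝ)), Real.rpow_pos_of_pos hxpos _, ?_⟩
  have hat' : aa k α t = 1 := by
    simp only [aa]
    rw [dif_pos (by omega : t - 1 < k)]
    exact hat
  have haz : ∀ ℓ', t < ℓ' → aa k α ℓ' = 0 := by
    intro ℓ' hℓ
    simp only [aa]
    split
    · next h => exact h0 ⟨ℓ' - 1, h⟩ (show t ≤ ℓ' - 1 by omega)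
    · rfl
  rw [eventually_atTop]
  refine ⟨t * (2^t + t)^t, fun n hn => ?_⟩
  set Q : ℕ → Prop := fun N => t * (2^N + t)^t ≤ n with hQ
  have hQt : Q t := hn
  have htn : t ≤ n := by
    have h1 : 1 ≤ (2^t + t)^t := Nat.one_le_pow _ _ (by positivity)
    calc t = t * 1 := (mul_one t).symm
      _ ≤ t * (2^t + t)^t := Nat.mul_le_mul_left t h1
      _ ≤ n := hn
  set N := Nat.findGreatest Q n with hN
  have hNQ : Q N := Nat.findGreatest_spec htn hQt
  have hNt : t ≤ N := Nat.le_findGreatest htn hQt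
  have htN : t < 2^N :=
    lt_of_lt_of_le (Nat.lt_two_pow_self (n := t)) (Nat.pow_le_pow_right (by norm_num) hNt)
  set m := 2^N + t with hmdef
  have hm1 : 1 ≤ m := by have := Nat.one_le_two_pow (n := N); omega
  have hfm : m ≤ fMax k n α :=
    fMax_ge k t α n N ht htN hat' haz (le_trans (P_card_le k t m α hm1) hNQ)
  have h2N_le_n : 2^N ≤ n := by
    have h1 : 2^N ≤ (2^N + t)^t := le_trans (Nat.le_add_right _ _) (Nat.le_self_pow (by omega) _)
    calc 2^N ≤ (2^N + t)^t := h1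
      _ ≤ t * (2^N + t)^t := Nat.le_mul_of_pos_left _ (by omega)
      _ ≤ n := hNQ
  have hN1 : ¬ Q (N + 1) := by
    apply Nat.findGreatest_is_greatest (by omega : N < N + 1)
    have : N < 2^N := Nat.lt_two_pow_self
    omega
  have hnlt : n < t * 2^t * m^t := by
    have h1 : 2^(N+1) + t ≤ 2 * m := by rw [pow_succ]; omega
    have h2 : t * (2^(N+1) + t)^t ≤ t * (2*m)^t :=
      Nat.mul_le_mul_left t (Nat.pow_le_pow_left h1 t)
    have h3 : n < t * (2^(N+1) + t)^t := by
      simp only [hQ] at hN1; omega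
    calc n < t * (2^(N+1)+t)^t := h3
      _ ≤ t * (2*m)^t := h2
      _ = t * 2^t * m^t := by rw [mul_pow, ← mul_assoc]
  -- real part
  have hmR : (0:ℝ) ≤ (m:ℝ) := by positivity
  have hcpos : (0:ℝ) < x ^ ((1:ℝ)/(t:ℝ)) := Real.rpow_pos_of_pos hxpos _
  have hnR : (0:ℝ) ≤ (n:ℝ) := by positivity
  have hbase : (0:ℝ) ≤ x ^ ((1:ℝ)/(t:ℝ)) * (n:ℝ) ^ ((1:ℝ)/(t:ℝ)) := by positivity
  have hct : (x ^ ((1:ℝ)/(t:ℝ)))^t = x := by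
    rw [← Real.rpow_natCast (x ^ ((1:ℝ)/(t:ℝ))) t, ← Real.rpow_mul hxpos.le,
      one_div, inv_mul_cancel₀ ht0, Real.rpow_one]
  have hnt : ((n:ℝ) ^ ((1:ℝ)/(t:ℝ)))^t = n := by
    rw [← Real.rpow_natCast ((n:ℝ) ^ ((1:ℝ)/(t:ℝ))) t, ← Real.rpow_mul hnR,
      one_div, inv_mul_cancel₀ ht0, Real.rpow_one]
  have key : (x ^ ((1:ℝ)/(t:ℝ)) * (n:ℝ) ^ ((1:ℝ)/(t:ℝ)))^t ≤ (m:ℝ)^t := by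
    rw [mul_pow, hct, hnt]
    rw [hxdef, inv_mul_le_iff₀ (by positivity)]
    have := hnlt
    have hcast : (n:ℝ) ≤ (t:ℝ) * 2^t * (m:ℝ)^t := by
      have : (n:ℝ) < ((t * 2^t * m^t : ℕ) : ℝ) := by exact_mod_cast Nat.cast_lt.mpr hnlt
      push_cast at this
      linarith
    linarith [hcast]
  have hfinal : x ^ ((1:ℝ)/(t:ℝ)) * (n:ℝ) ^ ((1:ℝ)/(t:ℝ)) ≤ (m:ℝ) :=
    (pow_le_pow_iff_left₀ hbase hmR (by omega)).mp key
  calc x ^ ((1:ℝ)/(t:ℝ)) * (n:ℝ) ^ ((1:ℝ)/(t:ℝ)) ≤ (m:ℝ) := hfinal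
    _ ≤ (fMax k n α : ℝ) := Nat.cast_le.mpr hfm
end

section
/- Let p be a prime, s ≥ 1, i ∈ {0,1,…,p^s − 1}, and let m ≥ p^s be an integer with m ≡ i (mod p^{φ_p(p^s−1)+1}), where φ_p(r) is the exponent of p in r!. For each j ∈ [m] let Ē_j = { e : e is a (p^s − 1)-element subset of [m] with j ∉ e }. Then for any ℓ ≥ 1 and any pairwise distinct indices j_1,…,j_ℓ ∈ [m], the cardinality |Ē_{j_1} ∩ ⋯ ∩ Ē_{j_ℓ}| = C(m−ℓ, p^s−1) satisfies: it is ≡ 1 (mod p) if ℓ ≡ i + 1 (mod p^s), and ≡ 0 (mod p) otherwise. Equivalently, the family {Ē_1,…,Ē_m} is ε̇_{i+1,p^s}-intersecting modulo p. -/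
/-- Iterated Lucas: `choose n (p^s - 1)` mod `p` is 1 iff `n ≡ p^s - 1 (mod p^s)`. -/
lemma lucas_pow_aux (p : ℕ) (hp : p.Prime) (s : ℕ) : ∀ n : ℕ,
    (n.choose (p ^ s - 1)) % p = if n % p ^ s = p ^ s - 1 then 1 else 0 := by
  haveI := Fact.mk hp
  have hp1 : 1 < p := hp.one_lt
  induction s with
  | zero =>
    intro n
    simp [Nat.mod_one, Nat.one_mod_eq_one.mpr (by omega : p ≠ 1)]
  | succ s ih =>
    intro n
    have hps : 1 ≤ p ^ s := Nat.one_le_pow _ _ hp.pos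
    have hmul : p ^ (s + 1) = p * p ^ s := by rw [pow_succ, mul_comm]
    have hmulsub : p * (p ^ s - 1) + p = p * p ^ s := by
      rw [← Nat.mul_succ]; congr 1; omega
    have decomp : p ^ (s + 1) - 1 = p * (p ^ s - 1) + (p - 1) := by omega
    have hkmod : (p ^ (s + 1) - 1) % p = p - 1 := by
      rw [decomp, Nat.mul_add_mod, Nat.mod_eq_of_lt (by omega)]
    have hkdiv : (p ^ (s + 1) - 1) / p = p ^ s - 1 := by
      rw [decomp, Nat.mul_add_div hp.pos, Nat.div_eq_of_lt (by omega), add_zero]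
    have L := Choose.choose_modEq_choose_mod_mul_choose_div_nat
      (p := p) (n := n) (k := p ^ (s + 1) - 1)
    rw [hkmod, hkdiv] at L
    have hnp : n % p < p := Nat.mod_lt _ hp.pos
    have small : (n % p).choose (p - 1) % p = if n % p = p - 1 then 1 else 0 := by
      rcases eq_or_ne (n % p) (p - 1) with h | h
      · rw [if_pos h, h, Nat.choose_self, Nat.one_mod_eq_one.mpr (by omega : p ≠ 1)]
      · rw [if_neg h, Nat.choose_eq_zero_of_lt (by omega), Nat.zero_mod]
    have hxlt : n / p % p ^ s < p ^ s := Nat.mod_lt _ (by positivity)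
    have hsplit : n % p ^ (s + 1) = n % p + p * (n / p % p ^ s) := by
      have hlt : n % p + p * (n / p % p ^ s) < p * p ^ s := by
        have hb : p * (n / p % p ^ s) + p ≤ p * p ^ s := by
          calc p * (n / p % p ^ s) + p = p * (n / p % p ^ s + 1) := by ring
            _ ≤ p * p ^ s := Nat.mul_le_mul_left _ (by omega)
        omega
      conv_lhs => rw [hmul, ← Nat.div_add_mod n p]
      rw [Nat.add_mod, Nat.mul_mod_mul_left,
        Nat.mod_eq_of_lt (show n % p < p * p ^ s by nlinarith),
        Nat.add_comm (p * (n / p % p ^ s)) (n % p), Nat.mod_eq_of_lt hlt]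
    have cond : (n % p ^ (s + 1) = p ^ (s + 1) - 1) ↔
        (n % p = p - 1 ∧ n / p % p ^ s = p ^ s - 1) := by
      rw [hsplit, decomp]
      constructor
      · intro h
        have h1 : n % p = p - 1 := by
          have e := congrArg (· % p) h
          simp only [Nat.add_mul_mod_self_left, Nat.mul_add_mod] at e
          rwa [Nat.mod_eq_of_lt hnp, Nat.mod_eq_of_lt (show p - 1 < p by omega)] at e
        refine ⟨h1, ?_⟩
        have h2 : p * (n / p % p ^ s) = p * (p ^ s - 1) := by omega
        exact Nat.eq_of_mul_eq_mul_left hp.pos h2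
      · rintro ⟨h1, h2⟩; rw [h1, h2, Nat.add_comm]
    rw [L, Nat.mul_mod, small, ih (n / p)]
    simp only [cond]
    rcases eq_or_ne (n % p) (p - 1) with h1 | h1 <;>
      rcases eq_or_ne (n / p % p ^ s) (p ^ s - 1) with h2 | h2 <;>
      simp [h1, h2, Nat.one_mod_eq_one.mpr (by omega : p ≠ 1)]

/-- For a prime `p`, `s ≥ 1`, `0 ≤ i ≤ p^s - 1` and `m ≡ i (mod p^(φ_p(p^s-1)+1))` with
`m ≥ p^s`, where `φ_p(r)` is the exponent of `p` in `r!`, the intersection of any `ℓ ≥ 1`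
pairwise distinct members of the family `Ē_j = {e ⊆ [m] : |e| = p^s - 1, j ∉ e}` (indexed by a
nonempty `T ⊆ [m]` of distinct indices) has cardinality `≡ 1 (mod p)` if
`ℓ = |T| ≡ i + 1 (mod p^s)`, and `≡ 0 (mod p)` otherwise. -/
theorem stmt16 (p : ℕ) (hp : p.Prime) (s m i : ℕ) (hs : 1 ≤ s) (hi : i < p ^ s)
    (hm : p ^ s ≤ m)
    (hmod : m ≡ i [MOD p ^ ((Nat.factorization (p ^ s - 1).factorial) p + 1)])
    (E : Fin m → Finset (Finset (Fin m)))
    (hE : ∀ j, E j = Finset.univ.filter (fun e : Finset (Fin m) => e.card = p ^ s - 1 ∧ j ∉ e))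
    (T : Finset (Fin m)) (hT : T.Nonempty) :
    (T.inf E).card % p = if T.card % p ^ s = (i + 1) % p ^ s then 1 else 0 := by
  classical
  haveI := Fact.mk hp
  have hp1 : 1 < p := hp.one_lt
  have hq1 : 1 ≤ p ^ s := Nat.one_le_pow _ _ hp.pos
  -- Step 1: identify the intersection with the powersetCard of Tᶜ
  have hinf : T.inf E = (Tᶜ).powersetCard (p ^ s - 1) := by
    rw [← Finset.inf'_eq_inf hT]
    ext e
    rw [Finset.mem_inf', Finset.mem_powersetCard]
    constructor
    · intro h
      have hc : e.card = p ^ s - 1 := by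
        obtain ⟨j, hj⟩ := hT
        have := h j hj
        rw [hE j, Finset.mem_filter] at this
        exact this.2.1
      refine ⟨fun a ha => Finset.mem_compl.mpr fun haT => ?_, hc⟩
      · have := h a haT
        rw [hE a, Finset.mem_filter] at this
        exact this.2.2 ha
    · rintro ⟨hsub, hc⟩ j hj
      rw [hE j, Finset.mem_filter]
      exact ⟨Finset.mem_univ _, hc, fun hje => (Finset.mem_compl.mp (hsub hje)) hj⟩
  have hTm : T.card ≤ m := by
    simpa using Finset.card_le_univ T
  have hcard : (T.inf E).card = (m - T.card).choose (p ^ s - 1) := by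
    rw [hinf, Finset.card_powersetCard, Finset.card_compl, Fintype.card_fin]
  -- Step 2: s ≤ φ_p(p^s - 1) + 1, so m ≡ i (mod p^s)
  have hφ : s - 1 ≤ (Nat.factorization (p ^ s - 1).factorial) p := by
    have hne : p ^ s - 1 ≠ 0 ∨ s - 1 = 0 := by
      rcases Nat.lt_or_ge 1 (p ^ s) with h | h
      · exact Or.inl (by omega)
      · have : p ^ s = 1 := by omega
        have : s = 0 := by
          by_contra hc
          have : p ≤ p ^ s := Nat.le_self_pow hc p
          omega
        omega
    rcases hne with hne | hz
    · have hlog : Nat.log p (p ^ s - 1) < s := by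
        exact Nat.log_lt_of_lt_pow hne (by omega)
      rw [Nat.factorization_def _ hp, padicValNat_factorial hlog]
      calc s - 1 = (Finset.Ico 1 s).card • 1 := by simp [Nat.card_Ico]
        _ ≤ ∑ j ∈ Finset.Ico 1 s, (p ^ s - 1) / p ^ j := by
            apply Finset.card_nsmul_le_sum
            intro j hj
            rw [Finset.mem_Ico] at hj
            rw [Nat.one_le_div_iff (pow_pos hp.pos j)]
            have h1 : p ^ j ≤ p ^ (s - 1) := Nat.pow_le_pow_right hp.pos (by omega)
            have h2 : p ^ (s - 1) * 2 ≤ p ^ (s - 1) * p :=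
              Nat.mul_le_mul_left _ hp1
            have h3 : p ^ (s - 1) * p = p ^ s := by
              rw [← pow_succ]; congr 1; omega
            omega
    · omega
  have hmi : m % p ^ s = i % p ^ s := by
    have hdvd : p ^ s ∣ p ^ ((Nat.factorization (p ^ s - 1).factorial) p + 1) :=
      pow_dvd_pow p (by omega)
    exact hmod.of_dvd hdvd
  -- Step 3: the choose value mod p
  rw [hcard, lucas_pow_aux p hp s (m - T.card)]
  -- Step 4: condition equivalence
  have hcond : ((m - T.card) % p ^ s = p ^ s - 1) ↔ (T.card % p ^ s = (i + 1) % p ^ s) := by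
    have key : ∀ a b : ℕ, a % p ^ s = b % p ^ s ↔
        (a + (T.card + 1)) % p ^ s = (b + (T.card + 1)) % p ^ s := by
      intro a b
      exact ⟨fun h => Nat.ModEq.add_right _ h, fun h => Nat.ModEq.add_right_cancel' _ h⟩
    have e1 : (m - T.card) + (T.card + 1) = m + 1 := by omega
    have e2 : (p ^ s - 1) + (T.card + 1) = p ^ s + T.card := by omega
    constructor
    · intro h
      have h' : (m - T.card) % p ^ s = (p ^ s - 1) % p ^ s := by
        rw [h, Nat.mod_eq_of_lt (by omega)]
      rw [key, e1, e2, Nat.add_mod_left] at h'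
      have : (m + 1) % p ^ s = (i + 1) % p ^ s := Nat.ModEq.add_right 1 hmi
      omega
    · intro h
      have h3 : (m + 1) % p ^ s = (i + 1) % p ^ s := Nat.ModEq.add_right 1 hmi
      have h5 : ((m - T.card) + (T.card + 1)) % p ^ s
          = ((p ^ s - 1) + (T.card + 1)) % p ^ s := by
        rw [e1, e2, Nat.add_mod_left]
        omega
      have h6 := (key _ _).mpr h5
      rw [Nat.mod_eq_of_lt (show p ^ s - 1 < p ^ s by omega)] at h6
      exact h6
  rw [if_congr hcond rfl rfl]
end
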